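/- Let r ≥ 2 and let γ:[−1,1]→ℝ² be a nonconstant C^r curve which is bounded in the sense that max_{2≤s≤r} sup_t ‖γ^{(s)}(t)‖ ≤ (1/6) sup_t ‖γ'(t)‖. Then: (i) γ has bounded distortion, i.e. ‖γ'(t)‖/‖γ'(s)‖ ≤ 3/2 for all t,s∈[−1,1] (in particular γ' never vanishes); and (ii) the tangent direction oscillates slowly, i.e. the angle between γ'(t) and γ'(s) is at most π/6 for all t,s∈[−1,1]. -/

import Mathlib

open Set

noncomputable section

/-- The plane `ℝ²` with the Euclidean norm. -/
abbrev V2 : Type := EuclideanSpace ℝ (Fin 2)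

/-- `‖dγ‖_∞`: the supremum of `‖γ'(t)‖` over `t ∈ [-1,1]`. -/
def supd (γ : ℝ → V2) : ℝ := ⨆ t : Set.Icc (-1 : ℝ) 1, ‖deriv γ (t : ℝ)‖

/-- Let `r ≥ 2` and let `γ : [-1,1] → ℝ²` be a nonconstant `C^r` curve
which is bounded in the sense that `max_{2 ≤ s ≤ r} ‖d^s γ‖_∞ ≤ (1/6) ‖dγ‖_∞`. Then:
(i) `γ` has bounded distortion, `‖γ'(t)‖/‖γ'(s)‖ ≤ 3/2` for all `t, s ∈ [-1,1]` (in
particular `γ'` never vanishes there); and (ii) the tangent direction oscillates slowly: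
the angle between `γ'(t)` and `γ'(s)` is at most `π/6` for all `t, s ∈ [-1,1]`. -/
theorem bounded_curve_distortion_and_angle (r : ℕ) (hr : 2 ≤ r)
    (γ : ℝ → V2) (hγ : ContDiff ℝ r γ)
    (hnc : ∃ t ∈ Set.Icc (-1 : ℝ) 1, ∃ s ∈ Set.Icc (-1 : ℝ) 1, γ t ≠ γ s)
    (hbd : ∀ s : ℕ, 2 ≤ s → s ≤ r → ∀ t ∈ Set.Icc (-1 : ℝ) 1,
      ‖iteratedDeriv s γ t‖ ≤ (1 / 6) * supd γ) :
    (∀ t ∈ Set.Icc (-1 : ℝ) 1, ∀ s ∈ Set.Icc (-1 : ℝ) 1,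
      deriv γ s ≠ 0 ∧ ‖deriv γ t‖ ≤ (3 / 2) * ‖deriv γ s‖) ∧
    (∀ t ∈ Set.Icc (-1 : ℝ) 1, ∀ s ∈ Set.Icc (-1 : ℝ) 1,
      InnerProductGeometry.angle (deriv γ t) (deriv γ s) ≤ Real.pi / 6) := by
  have hγ2 : ContDiff ℝ 2 γ := hγ.of_le (by exact_mod_cast hr)
  have hγd : ContDiff ℝ 1 (deriv γ) := by
    have h2 : ContDiff ℝ ((1:WithTop ℕ∞) + 1) γ := by
      convert hγ2 using 2
      norm_num
    exact (contDiff_succ_iff_deriv.mp h2).2.2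
  have hdiffd : Differentiable ℝ (deriv γ) := hγd.differentiable one_ne_zero
  have hcont : Continuous (deriv γ) := hγ.continuous_deriv (by exact_mod_cast (by omega : 1 ≤ r))
  haveI : Nonempty (Set.Icc (-1:ℝ) 1) := ⟨⟨0, by norm_num⟩⟩
  set M := supd γ with hM
  have hbdd : BddAbove (Set.range fun t : Set.Icc (-1:ℝ) 1 => ‖deriv γ (t:ℝ)‖) :=
    (isCompact_range (by fun_prop)).bddAbove
  have hle : ∀ t ∈ Set.Icc (-1:ℝ) 1, ‖deriv γ t‖ ≤ M := fun t ht =>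
    le_ciSup hbdd (⟨t, ht⟩ : Set.Icc (-1:ℝ) 1)
  obtain ⟨t₀, ht₀, hmax⟩ := (isCompact_Icc (a := (-1:ℝ)) (b := 1)).exists_isMaxOn
    (Set.nonempty_Icc.mpr (by norm_num)) (hcont.norm.continuousOn)
  have hMt₀ : M = ‖deriv γ t₀‖ :=
    le_antisymm (ciSup_le fun t => hmax t.2) (hle t₀ ht₀)
  -- second derivative bound
  have hd2 : ∀ x ∈ Set.Icc (-1:ℝ) 1, ‖deriv (deriv γ) x‖ ≤ M / 6 := by
    intro x hx
    have := hbd 2 le_rfl hr x hx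
    rw [show iteratedDeriv 2 γ = deriv (deriv γ) by
      simp [iteratedDeriv_succ, iteratedDeriv_one]] at this
    linarith
  -- Lipschitz estimate on deriv γ
  have hlip : ∀ t ∈ Set.Icc (-1:ℝ) 1, ∀ s ∈ Set.Icc (-1:ℝ) 1,
      ‖deriv γ t - deriv γ s‖ ≤ M / 3 := by
    intro t ht s hs
    have h1 : ‖deriv γ t - deriv γ s‖ ≤ (M / 6) * ‖t - s‖ :=
      (convex_Icc (-1:ℝ) 1).norm_image_sub_le_of_norm_deriv_le
        (fun x _ => hdiffd x) hd2 hs ht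
    have h2 : ‖t - s‖ ≤ 2 := by
      rw [Real.norm_eq_abs, abs_le]
      constructor <;> [linarith [ht.1, hs.2]; linarith [ht.2, hs.1]]
    have hM0 : 0 ≤ M := hMt₀ ▸ norm_nonneg _
    nlinarith
  -- M > 0
  have hMpos : 0 < M := by
    rcases lt_or_ge 0 M with h | h
    · exact h
    · exfalso
      obtain ⟨a, ha, b, hb, hab⟩ := hnc
      have hz : ∀ x ∈ Set.Icc (-1:ℝ) 1, ‖deriv γ x‖ ≤ (0:ℝ) := fun x hx =>
        (hle x hx).trans h
      have : ‖γ a - γ b‖ ≤ 0 * ‖a - b‖ :=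
        (convex_Icc (-1:ℝ) 1).norm_image_sub_le_of_norm_deriv_le
          (fun x _ => (hγ.differentiable (by exact_mod_cast (by omega : r ≠ 0))) x)
          hz hb ha
      apply hab
      rw [← sub_eq_zero, ← norm_le_zero_iff]
      simpa using this
  -- lower bound on norms
  have hlow : ∀ s ∈ Set.Icc (-1:ℝ) 1, 2 * M / 3 ≤ ‖deriv γ s‖ := by
    intro s hs
    have h1 := hlip t₀ ht₀ s hs
    have h2 := norm_sub_norm_le (deriv γ t₀) (deriv γ s)
    rw [← hMt₀] at h2
    linarith
  have hne : ∀ s ∈ Set.Icc (-1:ℝ) 1, deriv γ s ≠ 0 := by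
    intro s hs h
    have := hlow s hs
    rw [h, norm_zero] at this
    linarith
  constructor
  · intro t ht s hs
    refine ⟨hne s hs, ?_⟩
    have := hlow s hs
    have := hle t ht
    linarith
  · intro t ht s hs
    set u := deriv γ t with hu
    set w := deriv γ s with hw
    have hau : 2 * M / 3 ≤ ‖u‖ := hlow t ht
    have haw : 2 * M / 3 ≤ ‖w‖ := hlow s hs
    have hbu : ‖u‖ ≤ M := hle t ht
    have hbw : ‖w‖ ≤ M := hle s hs
    have hsub : ‖u - w‖ ≤ M / 3 := hlip t ht s hs
    have hsq : ‖u - w‖ ^ 2 = ‖u‖ ^ 2 - 2 * inner ℝ u w + ‖w‖ ^ 2 := by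
      exact norm_sub_sq_real u w
    have hprod : 0 < ‖u‖ * ‖w‖ := by nlinarith
    have hsqrt3 : Real.sqrt 3 ≤ 7 / 4 := by
      nlinarith [Real.sq_sqrt (by norm_num : (3:ℝ) ≥ 0), Real.sqrt_nonneg 3]
    have hinner : Real.sqrt 3 / 2 * (‖u‖ * ‖w‖) ≤ (inner ℝ u w : ℝ) := by
      nlinarith [sq_nonneg (‖u‖ - ‖w‖), sq_nonneg ‖u - w‖, norm_nonneg (u - w)]
    rw [InnerProductGeometry.angle]
    rw [show Real.pi / 6 = Real.arccos (Real.sqrt 3 / 2) by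
      rw [← Real.cos_pi_div_six, Real.arccos_cos (by positivity) (by
        linarith [Real.pi_pos])]]
    have anti : ∀ x y : ℝ, x ≤ y → Real.arccos y ≤ Real.arccos x := by
      intro x y h
      rw [Real.arccos_eq_pi_div_two_sub_arcsin, Real.arccos_eq_pi_div_two_sub_arcsin]
      linarith [Real.monotone_arcsin h]
    apply anti
    rw [le_div_iff₀ hprod]
    linarith [hinner]

end
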